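/- With ω_{g,n} as above (ω_{g,n}(1^{⊗a}, H̃^{⊗b}) = 2^g φ^{(g−1+b)/2} if g−1+b even, else 0), the separating gluing identity holds: for g = g₁+g₂ and any insertions v_1,…,v_n split among the two factors, Σ_{μ,ν} ω_{g₁,n₁+1}(v's, e_μ) η^{μν} ω_{g₂,n₂+1}(v's, e_ν) = ω_{g,n}(v_1,…,v_n). -/
import Mathlib


/-- The TQFT underlying equivariant Gromov–Witten theory of `ℙ¹`: its value on `b`
insertions of `H̃` in genus `g` is `2^g (√φ)^{g−1+b}` if `g−1+b` is even, else `0`. -/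
noncomputable def tqftP1 {K : Type*} [CommRing K] (s : K) (g b : ℕ) : K :=
  if Odd (g + b) then 2 ^ g * s ^ (g + b - 1) else 0

/-- The number of insertions of `H̃` among the basis vectors `(e 0, e 1) = (1, H̃)`. -/
def countH {n : ℕ} (v : Fin n → Fin 2) : ℕ :=
  (Finset.univ.filter fun i => v i = 1).card

lemma countH_snoc {n : ℕ} (v : Fin n → Fin 2) (μ : Fin 2) :
    countH (Fin.snoc v μ) = countH v + if μ = 1 then 1 else 0 := by
  unfold countH
  rw [Finset.card_filter, Finset.card_filter, Fin.sum_univ_castSucc]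
  simp only [Fin.snoc_castSucc, Fin.snoc_last]

lemma countH_snoc_zero {n : ℕ} (v : Fin n → Fin 2) :
    countH (Fin.snoc v 0) = countH v := by
  rw [countH_snoc]; norm_num

lemma countH_snoc_one {n : ℕ} (v : Fin n → Fin 2) :
    countH (Fin.snoc v 1) = countH v + 1 := by
  rw [countH_snoc]; norm_num

lemma tqft_key {K : Type*} [CommRing K] (s : K) (g₁ g₂ a b : ℕ) :
    tqftP1 s g₁ a * tqftP1 s g₂ (b + 1) + tqftP1 s g₁ (a + 1) * tqftP1 s g₂ b
      = tqftP1 s (g₁ + g₂) (a + b) := by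
  unfold tqftP1
  simp only [Nat.odd_iff]
  split_ifs <;>
    first
      | ring1
      | (exfalso; omega)
      | (rw [show g₂ + (b + 1) - 1 = g₂ + b from by omega,
            show g₁ + g₂ + (a + b) - 1 = (g₁ + a - 1) + (g₂ + b) from by omega,
            pow_add, pow_add]
         ring)
      | (rw [show g₁ + (a + 1) - 1 = g₁ + a from by omega,
            show g₁ + g₂ + (a + b) - 1 = (g₁ + a) + (g₂ + b - 1) from by omega,
            pow_add, pow_add]
         ring)

/-- Separating gluing identity for the TQFT `ω` with
`ω_{g,n}(1^{⊗a}, H̃^{⊗b}) = 2^g φ^{(g−1+b)/2}` (if `g−1+b` even, else `0`):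
for `g = g₁ + g₂` and insertions split among the two factors,
`Σ_{μ,ν} ω_{g₁,n₁+1}(v, e_μ) η^{μν} ω_{g₂,n₂+1}(u, e_ν) = ω_{g,n₁+n₂}(v, u)` with
`η^{μν} = [[0,1],[1,0]]`, under the stability conditions `2gᵢ−2+nᵢ+1 > 0`. -/
theorem tqft_glue_separating {K : Type*} [CommRing K] (s : K)
    (g₁ g₂ n₁ n₂ : ℕ) (h₁ : 2 < 2 * g₁ + n₁ + 1) (h₂ : 2 < 2 * g₂ + n₂ + 1)
    (v : Fin n₁ → Fin 2) (u : Fin n₂ → Fin 2)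
    (J : Matrix (Fin 2) (Fin 2) K) (hJ : J = !![0, 1; 1, 0]) :
    ∑ μ : Fin 2, ∑ ν : Fin 2,
        tqftP1 s g₁ (countH (Fin.snoc v μ)) * J μ ν * tqftP1 s g₂ (countH (Fin.snoc u ν))
      = tqftP1 s (g₁ + g₂) (countH v + countH u) := by
  subst hJ
  rw [Fin.sum_univ_two]
  conv_lhs => rw [Fin.sum_univ_two, Fin.sum_univ_two]
  have e00 : (!![(0:K), 1; 1, 0]) 0 0 = 0 := by norm_num
  have e01 : (!![(0:K), 1; 1, 0]) 0 1 = 1 := by norm_num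
  have e10 : (!![(0:K), 1; 1, 0]) 1 0 = 1 := by norm_num
  have e11 : (!![(0:K), 1; 1, 0]) 1 1 = 0 := by norm_num
  rw [countH_snoc_zero v, countH_snoc_one v, countH_snoc_zero u, countH_snoc_one u,
    e00, e01, e10, e11, mul_zero, zero_mul, mul_zero, zero_mul, mul_one, mul_one,
    zero_add, add_zero]
  exact tqft_key s g₁ g₂ (countH v) (countH u)
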